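/- arXiv:2510.22027 — 5 statements merged into one kernel-verified Lean document; each statement's English description precedes it below -/
import Mathlib

section
/- Let Λ ⊆ ℝ be a nonempty convex set, T a positive integer, ε_off ≥ 0 and R_T ∈ ℝ. Suppose D₁,…,D_T ∈ S and λ₁,…,λ_T ∈ Λ satisfy: (i) (offline-RL oracle error) for every t ∈ {1,…,T} and every D ∈ S, L(D, λ_t) ≤ L(D_t, λ_t) + ε_off; and (ii) (no-regret) for every λ ∈ Λ, ∑_{t=1}^T L(D_t, λ_t) ≤ ∑_{t=1}^T L(D_t, λ) + R_T. Set D̄ = (1/T)·∑_{t=1}^T D_t and λ̄ = (1/T)·∑_{t=1}^T λ_t. Then (D̄, λ̄) ∈ S × Λ is an ε-approximate minimax equilibrium with ε = ε_off + R_T/T; that is, L(D, λ̄) − ε ≤ L(D̄, λ̄) ≤ L(D̄, λ) + ε for all D ∈ S and all λ ∈ Λ. -/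
/-- Convergence of the general O3SRL framework to an ε-approximate
minimax equilibrium, with ε = ε_off + R_T/T. -/
theorem o3srl_approx_equilibrium
    {E : Type*} [AddCommGroup E] [Module ℝ E]
    (S : Set E) (hS : S.Nonempty) (hSconv : Convex ℝ S)
    (a b : E →ₗ[ℝ] ℝ) (κ : ℝ)
    (L : E → ℝ → ℝ) (hL : ∀ d lam, L d lam = a d - lam * (b d - κ))
    (Λ : Set ℝ) (hΛ : Λ.Nonempty) (hΛconv : Convex ℝ Λ)
    (T : ℕ) (hT : 0 < T)
    (εoff RT : ℝ) (hεoff : 0 ≤ εoff)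
    (D : Fin T → E) (hD : ∀ t, D t ∈ S)
    (lam : Fin T → ℝ) (hlam : ∀ t, lam t ∈ Λ)
    (horacle : ∀ t : Fin T, ∀ d ∈ S, L d (lam t) ≤ L (D t) (lam t) + εoff)
    (hregret : ∀ l ∈ Λ, ∑ t, L (D t) (lam t) ≤ ∑ t, L (D t) l + RT)
    (Dbar : E) (hDbar : Dbar = ((T : ℝ))⁻¹ • ∑ t, D t)
    (lambar : ℝ) (hlambar : lambar = ((T : ℝ))⁻¹ * ∑ t, lam t) :
    Dbar ∈ S ∧ lambar ∈ Λ ∧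
      ∀ d ∈ S, ∀ l ∈ Λ,
        L d lambar - (εoff + RT / T) ≤ L Dbar lambar ∧
        L Dbar lambar ≤ L Dbar l + (εoff + RT / T) := by
  have hTpos : (0 : ℝ) < T := by exact_mod_cast hT
  have hTne : (T : ℝ) ≠ 0 := ne_of_gt hTpos
  -- membership of Dbar
  have hDbarS : Dbar ∈ S := by
    rw [hDbar, Finset.smul_sum]
    exact hSconv.sum_mem (fun i _ => by positivity)
      (by simp [Finset.sum_const, hTne, mul_comm]) (fun i _ => hD i)
  have hlambarΛ : lambar ∈ Λ := by
    rw [hlambar, Finset.mul_sum]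
    exact hΛconv.sum_mem (fun i _ => by positivity)
      (by simp [Finset.sum_const, hTne, mul_comm]) (fun i _ => hlam i)
  -- sums of lam
  have hsumlam : ∑ t, lam t = T * lambar := by
    rw [hlambar]; field_simp
  have haD : a Dbar = (T : ℝ)⁻¹ * ∑ t, a (D t) := by
    rw [hDbar, map_smul, map_sum]; simp
  have hbD : b Dbar = (T : ℝ)⁻¹ * ∑ t, b (D t) := by
    rw [hDbar, map_smul, map_sum]; simp
  -- key identity 1: L d lambar = T⁻¹ * ∑ L d (lam t)
  have key1 : ∀ d, L d lambar = (T : ℝ)⁻¹ * ∑ t, L d (lam t) := by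
    intro d
    have : ∑ t, L d (lam t) = (T : ℝ) * a d - (∑ t, lam t) * (b d - κ) := by
      simp only [hL, Finset.sum_sub_distrib, Finset.sum_const, Finset.card_univ,
        Fintype.card_fin, nsmul_eq_mul, Finset.sum_mul]
    rw [this, hL, hsumlam]
    field_simp
  -- key identity 2: L Dbar l = T⁻¹ * ∑ L (D t) l
  have key2 : ∀ l, L Dbar l = (T : ℝ)⁻¹ * ∑ t, L (D t) l := by
    intro l
    have : ∑ t, L (D t) l = (∑ t, a (D t)) - l * ((∑ t, b (D t)) - (T : ℝ) * κ) := by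
      simp only [hL, Finset.sum_sub_distrib, ← Finset.mul_sum, Finset.sum_const,
        Finset.card_univ, Fintype.card_fin, nsmul_eq_mul]
    rw [this, hL Dbar l, haD, hbD]
    field_simp
    try ring
  refine ⟨hDbarS, hlambarΛ, fun d hd l hlmem => ?_⟩
  constructor
  · -- L d lambar - ε ≤ L Dbar lambar
    have h1 : ∑ t, L d (lam t) ≤ ∑ t, (L (D t) (lam t) + εoff) :=
      Finset.sum_le_sum (fun t _ => horacle t d hd)
    have h2 : ∑ t, L (D t) (lam t) ≤ ∑ t, L (D t) lambar + RT := hregret lambar hlambarΛ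
    have h3 : ∑ t, L d (lam t) ≤ ∑ t, L (D t) lambar + RT + T * εoff := by
      have : ∑ t, (L (D t) (lam t) + εoff) = ∑ t, L (D t) (lam t) + T * εoff := by
        simp [Finset.sum_add_distrib, Finset.sum_const, mul_comm]
      rw [this] at h1; linarith
    rw [key1 d, key2 lambar]
    have h4 := mul_le_mul_of_nonneg_left h3 (le_of_lt (inv_pos.mpr hTpos))
    have hcalc : (T:ℝ)⁻¹ * (∑ t, L (D t) lambar + RT + T * εoff)
        = (T:ℝ)⁻¹ * ∑ t, L (D t) lambar + RT / T + εoff := by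
      field_simp
    rw [hcalc] at h4
    linarith
  · -- L Dbar lambar ≤ L Dbar l + ε
    have h1 : ∑ t, L Dbar (lam t) ≤ ∑ t, (L (D t) (lam t) + εoff) :=
      Finset.sum_le_sum (fun t _ => horacle t Dbar hDbarS)
    have h2 : ∑ t, L (D t) (lam t) ≤ ∑ t, L (D t) l + RT := hregret l hlmem
    have hsc : ∑ t, (L (D t) (lam t) + εoff) = ∑ t, L (D t) (lam t) + T * εoff := by
      simp [Finset.sum_add_distrib, Finset.sum_const, mul_comm]
    have h3 : ∑ t, L Dbar (lam t) ≤ ∑ t, L (D t) l + RT + T * εoff := by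
      rw [hsc] at h1; linarith
    rw [key1 Dbar, key2 l]
    have h4 := mul_le_mul_of_nonneg_left h3 (le_of_lt (inv_pos.mpr hTpos))
    have hcalc : (T:ℝ)⁻¹ * (∑ t, L (D t) l + RT + T * εoff)
        = (T:ℝ)⁻¹ * ∑ t, L (D t) l + RT / T + εoff := by
      field_simp
    rw [hcalc] at h4
    linarith
end

section
/- Let Λ ⊆ ℝ be a nonempty convex set, T a positive integer, ε_off ≥ 0 and R_T ∈ ℝ. Suppose D₁,…,D_T ∈ S and λ₁,…,λ_T ∈ Λ satisfy: (i) for every t ∈ {1,…,T} and every D ∈ S, L(D, λ_t) ≤ L(D_t, λ_t) + ε_off; and (ii) for every λ ∈ Λ, ∑_{t=1}^T L(D_t, λ_t) ≤ ∑_{t=1}^T L(D_t, λ) + R_T. Set D̄ = (1/T)·∑_{t=1}^T D_t and λ̄ = (1/T)·∑_{t=1}^T λ_t. Then for every D ∈ S, L(D, λ̄) ≤ L(D̄, λ̄) + ε_off + R_T/T. -/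
/-- First half of the O3SRL equilibrium guarantee: for every D ∈ S,
L(D, λ̄) ≤ L(D̄, λ̄) + ε_off + R_T/T. -/
theorem o3srl_first_inequality
    {E : Type*} [AddCommGroup E] [Module ℝ E]
    (S : Set E) (hS : S.Nonempty) (hSconv : Convex ℝ S)
    (a b : E →ₗ[ℝ] ℝ) (κ : ℝ)
    (L : E → ℝ → ℝ) (hL : ∀ d lam, L d lam = a d - lam * (b d - κ))
    (Λ : Set ℝ) (hΛ : Λ.Nonempty) (hΛconv : Convex ℝ Λ)
    (T : ℕ) (hT : 0 < T)
    (εoff RT : ℝ) (hεoff : 0 ≤ εoff)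
    (D : Fin T → E) (hD : ∀ t, D t ∈ S)
    (lam : Fin T → ℝ) (hlam : ∀ t, lam t ∈ Λ)
    (horacle : ∀ t : Fin T, ∀ d ∈ S, L d (lam t) ≤ L (D t) (lam t) + εoff)
    (hregret : ∀ l ∈ Λ, ∑ t, L (D t) (lam t) ≤ ∑ t, L (D t) l + RT)
    (Dbar : E) (hDbar : Dbar = ((T : ℝ))⁻¹ • ∑ t, D t)
    (lambar : ℝ) (hlambar : lambar = ((T : ℝ))⁻¹ * ∑ t, lam t) :
    ∀ d ∈ S, L d lambar ≤ L Dbar lambar + εoff + RT / T := by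
  intro d hd
  have hT' : (T:ℝ) ≠ 0 := by positivity
  have hTpos : (0:ℝ) < T := by positivity
  have hsl : (T:ℝ) * lambar = ∑ t, lam t := by rw [hlambar]; field_simp
  have hmem : lambar ∈ Λ := by
    rw [hlambar, Finset.mul_sum]
    exact hΛconv.sum_mem (fun i _ => by positivity)
      (by simp [Finset.sum_const]; field_simp) (fun i _ => hlam i)
  have key1 : ∑ t, L d (lam t) = (T:ℝ) * L d lambar := by
    simp only [hL]
    rw [Finset.sum_sub_distrib, Finset.sum_const, Finset.card_univ, Fintype.card_fin, ← Finset.sum_mul, ← hsl]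
    push_cast
    ring
  have ha : a Dbar = (T:ℝ)⁻¹ * ∑ t, a (D t) := by
    rw [hDbar, map_smul, map_sum]; rfl
  have hb : b Dbar = (T:ℝ)⁻¹ * ∑ t, b (D t) := by
    rw [hDbar, map_smul, map_sum]; rfl
  have key2 : ∑ t, L (D t) lambar = (T:ℝ) * L Dbar lambar := by
    simp only [hL]
    rw [Finset.sum_sub_distrib, ha, hb, ← Finset.mul_sum, Finset.sum_sub_distrib,
      Finset.sum_const, Finset.card_univ, Fintype.card_fin]
    push_cast
    field_simp
    rw [nsmul_eq_mul]
  have h1 : ∑ t, L d (lam t) ≤ ∑ t, L (D t) (lam t) + (T:ℝ) * εoff := by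
    calc ∑ t, L d (lam t) ≤ ∑ t, (L (D t) (lam t) + εoff) :=
          Finset.sum_le_sum fun t _ => horacle t d hd
      _ = ∑ t, L (D t) (lam t) + (T:ℝ) * εoff := by
          rw [Finset.sum_add_distrib, Finset.sum_const, Finset.card_univ, Fintype.card_fin]; push_cast; ring
  have h2 := hregret lambar hmem
  rw [← mul_le_mul_iff_right₀ hTpos, mul_add, mul_add, mul_div_cancel₀ _ hT']
  linarith [key1, key2, h1, h2]
end

section
/- Let Λ ⊆ ℝ be a nonempty convex set, T a positive integer, ε_off ≥ 0 and R_T ∈ ℝ. Suppose D₁,…,D_T ∈ S and λ₁,…,λ_T ∈ Λ satisfy: (i) for every t ∈ {1,…,T} and every D ∈ S, L(D, λ_t) ≤ L(D_t, λ_t) + ε_off; and (ii) for every λ ∈ Λ, ∑_{t=1}^T L(D_t, λ_t) ≤ ∑_{t=1}^T L(D_t, λ) + R_T. Set D̄ = (1/T)·∑_{t=1}^T D_t and λ̄ = (1/T)·∑_{t=1}^T λ_t. Then for every λ ∈ Λ, L(D̄, λ) ≥ L(D̄, λ̄) − ε_off − R_T/T. -/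
/-- Second half of the O3SRL equilibrium guarantee: for every λ ∈ Λ,
L(D̄, λ) ≥ L(D̄, λ̄) − ε_off − R_T/T. -/
theorem o3srl_second_inequality
    {E : Type*} [AddCommGroup E] [Module ℝ E]
    (S : Set E) (hS : S.Nonempty) (hSconv : Convex ℝ S)
    (a b : E →ₗ[ℝ] ℝ) (κ : ℝ)
    (L : E → ℝ → ℝ) (hL : ∀ d lam, L d lam = a d - lam * (b d - κ))
    (Λ : Set ℝ) (hΛ : Λ.Nonempty) (hΛconv : Convex ℝ Λ)
    (T : ℕ) (hT : 0 < T)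
    (εoff RT : ℝ) (hεoff : 0 ≤ εoff)
    (D : Fin T → E) (hD : ∀ t, D t ∈ S)
    (lam : Fin T → ℝ) (hlam : ∀ t, lam t ∈ Λ)
    (horacle : ∀ t : Fin T, ∀ d ∈ S, L d (lam t) ≤ L (D t) (lam t) + εoff)
    (hregret : ∀ l ∈ Λ, ∑ t, L (D t) (lam t) ≤ ∑ t, L (D t) l + RT)
    (Dbar : E) (hDbar : Dbar = ((T : ℝ))⁻¹ • ∑ t, D t)
    (lambar : ℝ) (hlambar : lambar = ((T : ℝ))⁻¹ * ∑ t, lam t) :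
    ∀ l ∈ Λ, L Dbar l ≥ L Dbar lambar - εoff - RT / T := by
  intro l hl
  have hTR : (0 : ℝ) < (T : ℝ) := by exact_mod_cast hT
  have hTne : (T : ℝ) ≠ 0 := ne_of_gt hTR
  -- Dbar ∈ S
  have hDbarS : Dbar ∈ S := by
    have h1 : ∑ _t : Fin T, ((T : ℝ))⁻¹ = 1 := by
      simp [Finset.sum_const, Finset.card_univ, mul_inv_cancel₀ hTne]
    have := hSconv.sum_mem (t := Finset.univ) (w := fun _ : Fin T => ((T : ℝ))⁻¹)
      (z := D) (fun _ _ => by positivity) h1 (fun t _ => hD t)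
    rw [hDbar, Finset.smul_sum]
    simpa using this
  -- sums of lam
  have hsumlam : ∑ t, lam t = (T : ℝ) * lambar := by
    rw [hlambar]; field_simp
  -- key identities
  have haD : a Dbar = ((T : ℝ))⁻¹ * ∑ t, a (D t) := by
    rw [hDbar, map_smul, map_sum]; simp
  have hbD : b Dbar = ((T : ℝ))⁻¹ * ∑ t, b (D t) := by
    rw [hDbar, map_smul, map_sum]; simp
  have hsumL : ∀ μ : ℝ, ∑ t, L (D t) μ = (T : ℝ) * L Dbar μ := by
    intro μ
    simp only [hL, haD, hbD]
    rw [Finset.sum_sub_distrib]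
    field_simp
    ring_nf
    simp [Finset.mul_sum, Finset.sum_sub_distrib, mul_comm, mul_left_comm]
    ring
  -- ∑ L Dbar (lam t) = T * L Dbar lambar
  have hsumLbar : ∑ t, L Dbar (lam t) = (T : ℝ) * L Dbar lambar := by
    simp only [hL]
    rw [Finset.sum_sub_distrib, Finset.sum_const, Finset.card_univ, Fintype.card_fin,
      ← Finset.sum_mul, hsumlam]
    ring
  -- oracle summed
  have h2 : (T : ℝ) * L Dbar lambar ≤ ∑ t, L (D t) (lam t) + (T : ℝ) * εoff := by
    rw [← hsumLbar]
    calc ∑ t, L Dbar (lam t) ≤ ∑ t, (L (D t) (lam t) + εoff) :=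
          Finset.sum_le_sum fun t _ => horacle t Dbar hDbarS
      _ = ∑ t, L (D t) (lam t) + (T : ℝ) * εoff := by
          rw [Finset.sum_add_distrib, Finset.sum_const, Finset.card_univ, Fintype.card_fin,
            nsmul_eq_mul]
  have h3 := hregret l hl
  rw [hsumL l] at h3
  have h4 : (T : ℝ) * L Dbar lambar ≤ (T : ℝ) * L Dbar l + RT + (T : ℝ) * εoff := by
    linarith
  rw [ge_iff_le, div_eq_mul_inv, sub_sub]
  rw [sub_le_iff_le_add]
  rw [← mul_le_mul_iff_right₀ hTR]
  calc (T:ℝ) * L Dbar lambar ≤ (T:ℝ) * L Dbar l + RT + (T:ℝ) * εoff := h4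
    _ = (T:ℝ) * (L Dbar l + (εoff + RT * ((T:ℝ))⁻¹)) := by field_simp; ring
end

section
/- Let C > 0, let K and T be positive integers with K ≥ 2, let H > 0 satisfy |b(D) − κ| ≤ H for all D ∈ S, and let ε_off ≥ 0. Suppose D₁,…,D_T ∈ S and λ₁,…,λ_T ∈ Λ_K satisfy: (i) for every t ∈ {1,…,T} and every D ∈ S, L(D, λ_t) ≤ L(D_t, λ_t) + ε_off; and (ii) (EXP3 regret bound) for every λ ∈ Λ_K, ∑_{t=1}^T L(D_t, λ_t) ≤ ∑_{t=1}^T L(D_t, λ) + H·√(2·T·K·ln K). Set D̄ = (1/T)·∑_{t=1}^T D_t and λ̂ = (1/T)·∑_{t=1}^T λ_t, and let λ̄ ∈ Λ_K be any point with |λ̄ − λ̂| ≤ C/K. Then (D̄, λ̄) ∈ S × Λ_K is an ε-approximate minimax equilibrium with ε = ε_off + H·√(2·K·ln K / T) + 2·H·C/K; that is, L(D, λ̄) − ε ≤ L(D̄, λ̄) ≤ L(D̄, λ) + ε for all D ∈ S and all λ ∈ Λ_K. -/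
/-- The discretized O3SRL algorithm (EXP3 over K arms) returns an
ε-approximate minimax equilibrium with ε = ε_off + H·√(2·K·ln K / T) + 2·H·C/K. -/
theorem o3srl_exp3_approx_equilibrium
    {E : Type*} [AddCommGroup E] [Module ℝ E]
    (S : Set E) (hS : S.Nonempty) (hSconv : Convex ℝ S)
    (a b : E →ₗ[ℝ] ℝ) (κ : ℝ)
    (L : E → ℝ → ℝ) (hL : ∀ d lam, L d lam = a d - lam * (b d - κ))
    (C : ℝ) (hC : 0 < C)
    (K T : ℕ) (hK : 2 ≤ K) (hT : 0 < T)
    (ΛK : Set ℝ) (hΛK : ΛK = {x : ℝ | ∃ i : Fin K, x = (i : ℝ) * C / K})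
    (H : ℝ) (hH : 0 < H) (hHb : ∀ d ∈ S, |b d - κ| ≤ H)
    (εoff : ℝ) (hεoff : 0 ≤ εoff)
    (D : Fin T → E) (hD : ∀ t, D t ∈ S)
    (lam : Fin T → ℝ) (hlam : ∀ t, lam t ∈ ΛK)
    (horacle : ∀ t : Fin T, ∀ d ∈ S, L d (lam t) ≤ L (D t) (lam t) + εoff)
    (hregret : ∀ l ∈ ΛK,
      ∑ t, L (D t) (lam t) ≤ ∑ t, L (D t) l + H * Real.sqrt (2 * T * K * Real.log K))
    (Dbar : E) (hDbar : Dbar = ((T : ℝ))⁻¹ • ∑ t, D t)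
    (lamhat : ℝ) (hlamhat : lamhat = ((T : ℝ))⁻¹ * ∑ t, lam t)
    (lambar : ℝ) (hlambar : lambar ∈ ΛK) (hclose : |lambar - lamhat| ≤ C / K) :
    Dbar ∈ S ∧ lambar ∈ ΛK ∧
      ∀ d ∈ S, ∀ l ∈ ΛK,
        L d lambar - (εoff + H * Real.sqrt (2 * K * Real.log K / T) + 2 * H * C / K)
            ≤ L Dbar lambar ∧
        L Dbar lambar
            ≤ L Dbar l + (εoff + H * Real.sqrt (2 * K * Real.log K / T) + 2 * H * C / K) := by
  have hT' : (0:ℝ) < T := by exact_mod_cast hT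
  have hTne : (T:ℝ) ≠ 0 := ne_of_gt hT'
  have hK' : (1:ℝ) ≤ K := by exact_mod_cast (le_trans (by norm_num) hK)
  have hlogK : 0 ≤ Real.log K := Real.log_nonneg hK'
  -- Dbar ∈ S
  have hmem : Dbar ∈ S := by
    rw [hDbar, Finset.smul_sum]
    exact hSconv.sum_mem (fun t _ => by positivity)
      (by simp [Finset.sum_const, Finset.card_univ]; field_simp)
      (fun t _ => hD t)
  -- linearity in d
  have key1 : ∀ l : ℝ, L Dbar l = (T:ℝ)⁻¹ * ∑ t, L (D t) l := by
    intro l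
    simp only [hL, hDbar, map_smul, map_sum, smul_eq_mul]
    simp only [mul_sub, Finset.sum_sub_distrib, ← Finset.mul_sum, Finset.sum_const,
      Finset.card_univ, Fintype.card_fin, nsmul_eq_mul]
    field_simp
  -- linearity in lam
  have key2 : ∀ d : E, L d lamhat = (T:ℝ)⁻¹ * ∑ t, L d (lam t) := by
    intro d
    simp only [hL, hlamhat]
    simp only [mul_sub, Finset.sum_sub_distrib, ← Finset.sum_mul, Finset.sum_const,
      Finset.card_univ, Fintype.card_fin, nsmul_eq_mul]
    field_simp
  -- Lipschitz-type bound in lam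
  have hlip : ∀ d ∈ S, ∀ l1 l2 : ℝ, L d l1 - L d l2 ≤ |l1 - l2| * H := by
    intro d hd l1 l2
    have : L d l1 - L d l2 = (l2 - l1) * (b d - κ) := by rw [hL, hL]; ring
    rw [this]
    calc (l2 - l1) * (b d - κ) ≤ |(l2 - l1) * (b d - κ)| := le_abs_self _
      _ = |l2 - l1| * |b d - κ| := abs_mul _ _
      _ ≤ |l1 - l2| * H := by
          rw [abs_sub_comm]
          exact mul_le_mul_of_nonneg_left (hHb d hd) (abs_nonneg _)
  have hCK : 0 ≤ C / K := by positivity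
  have hHCK : |lambar - lamhat| * H ≤ H * C / K := by
    calc |lambar - lamhat| * H ≤ (C / K) * H :=
          mul_le_mul_of_nonneg_right hclose (le_of_lt hH)
      _ = H * C / K := by ring
  -- sqrt identity
  have hsqrt : (T:ℝ)⁻¹ * (H * Real.sqrt (2 * T * K * Real.log K))
      = H * Real.sqrt (2 * K * Real.log K / T) := by
    have h1 : (2 * (K:ℝ) * Real.log K / T) = (2 * T * K * Real.log K) / (T:ℝ)^2 := by
      field_simp
    rw [h1, Real.sqrt_div (by positivity), Real.sqrt_sq (le_of_lt hT')]
    ring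
  have hεsqrt : 0 ≤ H * Real.sqrt (2 * K * Real.log K / T) := by positivity
  have hεHCK : 0 ≤ H * C / K := by positivity
  refine ⟨hmem, hlambar, fun d hd l hl => ⟨?_, ?_⟩⟩
  · -- lower bound: L d lambar - ε ≤ L Dbar lambar
    have h1 : L d lambar ≤ L d lamhat + H * C / K := by
      have := hlip d hd lambar lamhat
      linarith [hHCK]
    have h2 : L d lamhat ≤ (T:ℝ)⁻¹ * ∑ t, L (D t) (lam t) + εoff := by
      rw [key2]
      have hsum : ∑ t, L d (lam t) ≤ ∑ t, (L (D t) (lam t) + εoff) :=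
        Finset.sum_le_sum (fun t _ => horacle t d hd)
      have : ∑ t, (L (D t) (lam t) + εoff) = ∑ t, L (D t) (lam t) + T * εoff := by
        rw [Finset.sum_add_distrib]; simp [Finset.card_univ, mul_comm]
      rw [this] at hsum
      have := mul_le_mul_of_nonneg_left hsum (le_of_lt (inv_pos.mpr hT'))
      calc (T:ℝ)⁻¹ * ∑ t, L d (lam t)
          ≤ (T:ℝ)⁻¹ * (∑ t, L (D t) (lam t) + T * εoff) := this
        _ = (T:ℝ)⁻¹ * ∑ t, L (D t) (lam t) + εoff := by field_simp
    have h3 : (T:ℝ)⁻¹ * ∑ t, L (D t) (lam t)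
        ≤ L Dbar lambar + H * Real.sqrt (2 * K * Real.log K / T) := by
      have := hregret lambar hlambar
      have := mul_le_mul_of_nonneg_left this (le_of_lt (inv_pos.mpr hT'))
      rw [key1 lambar]
      calc (T:ℝ)⁻¹ * ∑ t, L (D t) (lam t)
          ≤ (T:ℝ)⁻¹ * (∑ t, L (D t) lambar + H * Real.sqrt (2 * T * K * Real.log K)) := this
        _ = (T:ℝ)⁻¹ * ∑ t, L (D t) lambar + H * Real.sqrt (2 * K * Real.log K / T) := by
            rw [mul_add, hsqrt]
    have h2e : 2 * H * C / (K:ℝ) = H * C / K + H * C / K := by ring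
    linarith [hεHCK]
  · -- upper bound
    have h1 : L Dbar lambar ≤ L Dbar lamhat + H * C / K := by
      have := hlip Dbar hmem lambar lamhat
      linarith [hHCK]
    have h2 : L Dbar lamhat ≤ (T:ℝ)⁻¹ * ∑ t, L (D t) (lam t) + εoff := by
      rw [key2]
      have hsum : ∑ t, L Dbar (lam t) ≤ ∑ t, (L (D t) (lam t) + εoff) :=
        Finset.sum_le_sum (fun t _ => horacle t Dbar hmem)
      have heq : ∑ t, (L (D t) (lam t) + εoff) = ∑ t, L (D t) (lam t) + T * εoff := by
        rw [Finset.sum_add_distrib]; simp [Finset.card_univ, mul_comm]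
      rw [heq] at hsum
      have := mul_le_mul_of_nonneg_left hsum (le_of_lt (inv_pos.mpr hT'))
      calc (T:ℝ)⁻¹ * ∑ t, L Dbar (lam t)
          ≤ (T:ℝ)⁻¹ * (∑ t, L (D t) (lam t) + T * εoff) := this
        _ = (T:ℝ)⁻¹ * ∑ t, L (D t) (lam t) + εoff := by field_simp
    have h3 : (T:ℝ)⁻¹ * ∑ t, L (D t) (lam t)
        ≤ L Dbar l + H * Real.sqrt (2 * K * Real.log K / T) := by
      have := hregret l hl
      have := mul_le_mul_of_nonneg_left this (le_of_lt (inv_pos.mpr hT'))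
      rw [key1 l]
      calc (T:ℝ)⁻¹ * ∑ t, L (D t) (lam t)
          ≤ (T:ℝ)⁻¹ * (∑ t, L (D t) l + H * Real.sqrt (2 * T * K * Real.log K)) := this
        _ = (T:ℝ)⁻¹ * ∑ t, L (D t) l + H * Real.sqrt (2 * K * Real.log K / T) := by
            rw [mul_add, hsqrt]
    have h2e : 2 * H * C / (K:ℝ) = H * C / K + H * C / K := by ring
    linarith [hεHCK]
end

section
/- Let C > 0, let K and T be positive integers with K ≥ 2, and let ε_off ≥ 0. Suppose D₁,…,D_T ∈ S and λ₁,…,λ_T ∈ Λ_K satisfy: (i) for every t ∈ {1,…,T} and every D ∈ S, L(D, λ_t) ≤ L(D_t, λ_t) + ε_off; and (ii) for every λ ∈ Λ_K, ∑_{t=1}^T L(D_t, λ_t) ≤ ∑_{t=1}^T L(D_t, λ) + H·√(2·T·K·ln K), where H > 0. Set D̄ = (1/T)·∑_{t=1}^T D_t and λ̂ = (1/T)·∑_{t=1}^T λ_t (note λ̂ lies in the convex hull [0, (K−1)·C/K] of Λ_K but need not lie in Λ_K). Then with ε₁ = ε_off + H·√(2·K·ln K / T): for every D ∈ S, L(D,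 λ̂) ≤ L(D̄, λ̂) + ε₁, and for every λ ∈ Λ_K, L(D̄, λ̂) ≤ L(D̄, λ) + ε₁. -/
/-- Intermediate guarantee for the discretized algorithm at the
(possibly non-discretized) average multiplier λ̂, with ε₁ = ε_off + H·√(2·K·ln K / T). -/
theorem o3srl_exp3_intermediate
    {E : Type*} [AddCommGroup E] [Module ℝ E]
    (S : Set E) (hS : S.Nonempty) (hSconv : Convex ℝ S)
    (a b : E →ₗ[ℝ] ℝ) (κ : ℝ)
    (L : E → ℝ → ℝ) (hL : ∀ d lam, L d lam = a d - lam * (b d - κ))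
    (C : ℝ) (hC : 0 < C)
    (K T : ℕ) (hK : 2 ≤ K) (hT : 0 < T)
    (ΛK : Set ℝ) (hΛK : ΛK = {x : ℝ | ∃ i : Fin K, x = (i : ℝ) * C / K})
    (H : ℝ) (hH : 0 < H)
    (εoff : ℝ) (hεoff : 0 ≤ εoff)
    (D : Fin T → E) (hD : ∀ t, D t ∈ S)
    (lam : Fin T → ℝ) (hlam : ∀ t, lam t ∈ ΛK)
    (horacle : ∀ t : Fin T, ∀ d ∈ S, L d (lam t) ≤ L (D t) (lam t) + εoff)
    (hregret : ∀ l ∈ ΛK,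
      ∑ t, L (D t) (lam t) ≤ ∑ t, L (D t) l + H * Real.sqrt (2 * T * K * Real.log K))
    (Dbar : E) (hDbar : Dbar = ((T : ℝ))⁻¹ • ∑ t, D t)
    (lamhat : ℝ) (hlamhat : lamhat = ((T : ℝ))⁻¹ * ∑ t, lam t) :
    (∀ d ∈ S, L d lamhat ≤ L Dbar lamhat + (εoff + H * Real.sqrt (2 * K * Real.log K / T))) ∧
    (∀ l ∈ ΛK, L Dbar lamhat ≤ L Dbar l + (εoff + H * Real.sqrt (2 * K * Real.log K / T))) := by
  have hT0 : (0:ℝ) < T := by exact_mod_cast hT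
  have hK0 : (0:ℝ) < K := by
    have : (0:ℕ) < K := by omega
    exact_mod_cast this
  have hK1 : (1:ℝ) ≤ K := by
    have : (1:ℕ) ≤ K := by omega
    exact_mod_cast this
  -- sqrt identity
  have hsqrt : H * Real.sqrt (2 * T * K * Real.log K)
      = T * (H * Real.sqrt (2 * K * Real.log K / T)) := by
    have h1 : (2:ℝ) * T * K * Real.log K = (T:ℝ)^2 * (2 * K * Real.log K / T) := by
      field_simp
    rw [h1, Real.sqrt_mul (sq_nonneg _), Real.sqrt_sq hT0.le]; ring
  set R := H * Real.sqrt (2 * T * K * Real.log K) with hR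
  set ε₁ := εoff + H * Real.sqrt (2 * K * Real.log K / T) with hε₁
  -- Dbar ∈ S
  have hDbarS : Dbar ∈ S := by
    rw [hDbar, Finset.smul_sum]
    apply hSconv.sum_mem (fun i _ => by positivity)
    · simp [Finset.sum_const, Finset.card_univ]
      field_simp
    · exact fun i _ => hD i
  -- bounds on lam t
  set M : ℝ := ((K:ℝ) - 1) * C / K with hM
  have hlam_bd : ∀ t, 0 ≤ lam t ∧ lam t ≤ M := by
    intro t
    obtain ⟨i, hi⟩ := by rw [hΛK] at hlam; exact hlam t
    have hiK : (i:ℝ) ≤ (K:ℝ) - 1 := by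
      have : (i:ℕ) ≤ K - 1 := by omega
      have h2 : ((i:ℕ):ℝ) ≤ ((K-1:ℕ):ℝ) := by exact_mod_cast this
      rwa [Nat.cast_sub (by omega), Nat.cast_one] at h2
    constructor
    · rw [hi]; positivity
    · rw [hi, hM]
      gcongr
  have hlamhat0 : 0 ≤ lamhat := by
    rw [hlamhat]
    have : 0 ≤ ∑ t, lam t := Finset.sum_nonneg fun t _ => (hlam_bd t).1
    positivity
  have hlamhatM : lamhat ≤ M := by
    rw [hlamhat]
    have h1 : ∑ t, lam t ≤ ∑ _t : Fin T, M :=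
      Finset.sum_le_sum fun t _ => (hlam_bd t).2
    have h2 : ∑ _t : Fin T, M = T * M := by
      simp [Finset.sum_const, Finset.card_univ, mul_comm]
    have h3 : (T:ℝ)⁻¹ * ∑ t, lam t ≤ (T:ℝ)⁻¹ * (T * M) :=
      mul_le_mul_of_nonneg_left (h2 ▸ h1) (by positivity)
    have h4 : (T:ℝ)⁻¹ * ((T:ℝ) * M) = M := by field_simp
    linarith
  -- membership of endpoints
  have h0mem : (0:ℝ) ∈ ΛK := by
    rw [hΛK]
    exact ⟨⟨0, by omega⟩, by simp⟩
  have hMmem : M ∈ ΛK := by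
    rw [hΛK]
    refine ⟨⟨K - 1, by omega⟩, ?_⟩
    rw [hM]
    congr 1
    congr 1
    simp [Nat.cast_sub (show 1 ≤ K by omega)]
  -- identity: sum over D of L at fixed l
  have id1 : ∀ l : ℝ, ∑ t, L (D t) l = T * L Dbar l := by
    intro l
    have ha : a Dbar = (T:ℝ)⁻¹ * ∑ t, a (D t) := by
      rw [hDbar]; simp [map_smul, map_sum]
    have hb' : b Dbar = (T:ℝ)⁻¹ * ∑ t, b (D t) := by
      rw [hDbar]; simp [map_smul, map_sum]
    have e : ∑ t, L (D t) l
        = (∑ t, a (D t)) - l * ((∑ t, b (D t)) - T * κ) := by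
      simp only [hL, Finset.sum_sub_distrib, Finset.sum_const, Finset.card_univ,
        Fintype.card_fin, nsmul_eq_mul, mul_sub, Finset.mul_sum]
      ring
    rw [e, hL Dbar l, ha, hb']
    field_simp
  -- identity: sum over lam of L at fixed d
  have id2 : ∀ d : E, ∑ t, L d (lam t) = T * L d lamhat := by
    intro d
    simp only [hL, hlamhat, Finset.sum_sub_distrib, Finset.sum_const, Finset.card_univ,
      Fintype.card_fin, nsmul_eq_mul, ← Finset.sum_mul]
    field_simp
  -- affine extension of regret to lamhat
  have hreg_hat : ∑ t, L (D t) (lam t) ≤ ∑ t, L (D t) lamhat + R := by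
    have e : ∀ l : ℝ, ∑ t, L (D t) l
        = (∑ t, a (D t)) - l * ((∑ t, b (D t)) - T * κ) := by
      intro l
      simp only [hL, Finset.sum_sub_distrib, Finset.sum_const, Finset.card_univ,
        Fintype.card_fin, nsmul_eq_mul, mul_sub, Finset.mul_sum]
      ring
    have h0 := hregret 0 h0mem
    have hMr := hregret M hMmem
    rw [e 0] at h0
    rw [e M] at hMr
    rw [e lamhat]
    set B := (∑ t, b (D t)) - T * κ with hB
    rcases le_or_gt 0 B with hb | hb
    · nlinarith [mul_le_mul_of_nonneg_right hlamhatM hb]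
    · nlinarith [mul_nonneg hlamhat0 (le_of_lt (neg_pos.mpr hb))]
  constructor
  · intro d hd
    have h1 : T * L d lamhat ≤ T * L Dbar lamhat + T * εoff + R := by
      rw [← id2 d]
      calc ∑ t, L d (lam t) ≤ ∑ t, (L (D t) (lam t) + εoff) :=
            Finset.sum_le_sum fun t _ => horacle t d hd
        _ = ∑ t, L (D t) (lam t) + T * εoff := by
            rw [Finset.sum_add_distrib]
            simp [Finset.sum_const, Finset.card_univ, mul_comm]
        _ ≤ ∑ t, L (D t) lamhat + R + T * εoff := by linarith [hreg_hat]
        _ = T * L Dbar lamhat + T * εoff + R := by rw [id1]; ring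
    have : T * L d lamhat ≤ T * (L Dbar lamhat + ε₁) := by
      rw [hε₁]
      have := hsqrt
      nlinarith
    exact le_of_mul_le_mul_left (by linarith [this]) hT0
  · intro l hl
    have h1 : T * L Dbar lamhat ≤ T * L Dbar l + T * εoff + R := by
      rw [← id2 Dbar]
      calc ∑ t, L Dbar (lam t) ≤ ∑ t, (L (D t) (lam t) + εoff) :=
            Finset.sum_le_sum fun t _ => horacle t Dbar hDbarS
        _ = ∑ t, L (D t) (lam t) + T * εoff := by
            rw [Finset.sum_add_distrib]
            simp [Finset.sum_const, Finset.card_univ, mul_comm]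
        _ ≤ ∑ t, L (D t) l + R + T * εoff := by linarith [hregret l hl]
        _ = T * L Dbar l + T * εoff + R := by rw [id1]; ring
    have : T * L Dbar lamhat ≤ T * (L Dbar l + ε₁) := by
      rw [hε₁]
      have := hsqrt
      nlinarith
    exact le_of_mul_le_mul_left (by linarith [this]) hT0
end
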